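/- For every integer m ≥ 3 and every positive integer k, the theta graph with k legs, each of length m, is cubical. -/

import Mathlib

open SimpleGraph

/-- The hypercube graph `Q_n`. -/
def hypercube (n : ℕ) : SimpleGraph (Finset (Fin n)) where
  Adj A B := (A ⊆ B ∧ B.card = A.card + 1) ∨ (B ⊆ A ∧ A.card = B.card + 1)
  symm := ⟨fun A B h => h.symm⟩
  loopless := by
    refine ⟨fun A h => ?_⟩
    rcases h with ⟨-, h⟩ | ⟨-, h⟩ <;> omega

/-- `G` contains a copy of `H`, i.e. `H` is isomorphic to a subgraph of `G`. -/
def ContainsCopy {α β : Type*} (G : SimpleGraph α) (H : SimpleGraph β) : Prop :=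
  ∃ f : β → α, Function.Injective f ∧ ∀ u v, H.Adj u v → G.Adj (f u) (f v)

/-- A graph is cubical if it is isomorphic to a subgraph of a hypercube. -/
def IsCubical {V : Type*} (G : SimpleGraph V) : Prop :=
  ∃ n : ℕ, ContainsCopy (hypercube n) G

/-- The theta graph with two poles (\`Sum.inl 0\` and \`Sum.inl 1\`) and \`k\` legs, each a
path of length \`m ≥ 2\` with \`m - 1\` internal vertices: leg \`i\` is
\`pole 0, (i,0), (i,1), …, (i,m-2), pole 1\`. -/
def thetaGraph (k m : ℕ) : SimpleGraph (Fin 2 ⊕ (Fin k × Fin (m - 1))) :=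
  SimpleGraph.fromRel (fun x y =>
    match x, y with
    | Sum.inl p, Sum.inr (_, l) => (p = 0 ∧ l.val = 0) ∨ (p = 1 ∧ l.val = m - 2)
    | Sum.inr (i, l), Sum.inr (i', l') => i = i' ∧ l.val + 1 = l'.val
    | _, _ => False)

/-- For every integer `m ≥ 3` and every positive integer `k`, the theta graph with `k`
legs of length `m` each is cubical. -/
theorem theta_cubical (m k : ℕ) (hm : 3 ≤ m) (hk : 1 ≤ k) :
    IsCubical (thetaGraph k m) := by
  refine ⟨k + (m - 2), ?_⟩
  have hkn : ∀ i : Fin k, (i : ℕ) < k + (m - 2) := fun i => by omega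
  set F : Fin 2 ⊕ (Fin k × Fin (m - 1)) → Finset (Fin (k + (m - 2))) := fun x =>
    match x with
    | Sum.inl p => if p = 0 then ∅ else Finset.univ.filter (fun x => k ≤ x.val)
    | Sum.inr (i, l) =>
        insert ⟨i.val, hkn i⟩
          (Finset.univ.filter (fun x => k ≤ x.val ∧ x.val < k + l.val)) with hF
  have memF : ∀ (i : Fin k) (l : Fin (m - 1)) (x : Fin (k + (m - 2))),
      x ∈ F (Sum.inr (i, l)) ↔ x.val = i.val ∨ (k ≤ x.val ∧ x.val < k + l.val) := by
    intro i l x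
    simp only [hF, Finset.mem_insert, Finset.mem_filter, Finset.mem_univ, true_and, Fin.ext_iff]
  have memF1 : ∀ x : Fin (k + (m - 2)), x ∈ F (Sum.inl 1) ↔ k ≤ x.val := by
    intro x; simp [hF]
  have memF0 : ∀ x : Fin (k + (m - 2)), x ∉ F (Sum.inl 0) := by
    intro x; simp [hF]
  -- step lemmas
  have step1 : ∀ (i : Fin k) (l : Fin (m - 1)), l.val = 0 →
      (hypercube (k + (m - 2))).Adj (F (Sum.inl 0)) (F (Sum.inr (i, l))) := by
    intro i l hl
    left
    have heq : F (Sum.inr (i, l)) = {⟨i.val, hkn i⟩} := by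
      ext x
      rw [memF]
      have hv : ((⟨i.val, hkn i⟩ : Fin (k + (m - 2))) : ℕ) = i.val := rfl
      simp only [Finset.mem_singleton, Fin.ext_iff, hv]
      have := x.isLt
      omega
    constructor
    · intro x hx; exact absurd hx (memF0 x)
    · rw [heq]
      have h0 : F (Sum.inl 0) = ∅ := by
        ext x; simp [memF0 x]
      rw [h0]
      simp
  have step2 : ∀ (i : Fin k) (l : Fin (m - 1)), l.val = m - 2 →
      (hypercube (k + (m - 2))).Adj (F (Sum.inl 1)) (F (Sum.inr (i, l))) := by
    intro i l hl
    left
    have hv : ((⟨i.val, hkn i⟩ : Fin (k + (m - 2))) : ℕ) = i.val := rfl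
    have hik : i.val < k := i.isLt
    have hins : F (Sum.inr (i, l)) = insert ⟨i.val, hkn i⟩ (F (Sum.inl 1)) := by
      ext x
      rw [memF, Finset.mem_insert, memF1]
      have := x.isLt
      simp only [Fin.ext_iff, hv]
      omega
    have hni : (⟨i.val, hkn i⟩ : Fin (k + (m - 2))) ∉ F (Sum.inl 1) := by
      rw [memF1, hv]; omega
    constructor
    · rw [hins]; exact Finset.subset_insert _ _
    · rw [hins, Finset.card_insert_of_notMem hni]
  have step3 : ∀ (i : Fin k) (l l' : Fin (m - 1)), l.val + 1 = l'.val →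
      (hypercube (k + (m - 2))).Adj (F (Sum.inr (i, l))) (F (Sum.inr (i, l'))) := by
    intro i l l' hl
    left
    have hb : k + l.val < k + (m - 2) := by have := l'.isLt; omega
    have hv : ((⟨k + l.val, hb⟩ : Fin (k + (m - 2))) : ℕ) = k + l.val := rfl
    have hni : (⟨k + l.val, hb⟩ : Fin (k + (m - 2))) ∉ F (Sum.inr (i, l)) := by
      rw [memF, hv]
      have := i.isLt
      omega
    have hins : F (Sum.inr (i, l')) = insert ⟨k + l.val, hb⟩ (F (Sum.inr (i, l))) := by
      ext x
      rw [memF, Finset.mem_insert, memF]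
      simp only [Fin.ext_iff, hv]
      omega
    constructor
    · rw [hins]; exact Finset.subset_insert _ _
    · rw [hins, Finset.card_insert_of_notMem hni]
  refine ⟨F, ?_, ?_⟩
  · -- injectivity
    intro a b hab
    match a, b with
    | Sum.inl p, Sum.inl q =>
      have hx : (⟨k, by omega⟩ : Fin (k + (m - 2))) ∈ F (Sum.inl 1) := by
        rw [memF1]
      fin_cases p <;> fin_cases q
      · rfl
      · exact absurd (hab ▸ hx) (memF0 _)
      · exact absurd (hab.symm ▸ hx) (memF0 _)
      · rfl
    | Sum.inl p, Sum.inr (i, l) =>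
      exfalso
      have hi : (⟨i.val, hkn i⟩ : Fin (k + (m - 2))) ∈ F (Sum.inr (i, l)) := by
        rw [memF]; left; rfl
      rw [← hab] at hi
      have hv : ((⟨i.val, hkn i⟩ : Fin (k + (m - 2))) : ℕ) = i.val := rfl
      have hik : i.val < k := i.isLt
      fin_cases p
      · exact memF0 _ hi
      · have := (memF1 _).1 hi
        omega
    | Sum.inr (i, l), Sum.inl p =>
      exfalso
      have hi : (⟨i.val, hkn i⟩ : Fin (k + (m - 2))) ∈ F (Sum.inr (i, l)) := by
        rw [memF]; left; rfl
      rw [hab] at hi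
      have hv : ((⟨i.val, hkn i⟩ : Fin (k + (m - 2))) : ℕ) = i.val := rfl
      have hik : i.val < k := i.isLt
      fin_cases p
      · exact memF0 _ hi
      · have := (memF1 _).1 hi
        omega
    | Sum.inr (i, l), Sum.inr (i', l') =>
      have hv : ((⟨i.val, hkn i⟩ : Fin (k + (m - 2))) : ℕ) = i.val := rfl
      have hik : i.val < k := i.isLt
      have hii : i = i' := by
        have hi : (⟨i.val, hkn i⟩ : Fin (k + (m - 2))) ∈ F (Sum.inr (i, l)) := by
          rw [memF]; left; rfl
        rw [hab, memF] at hi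
        rw [hv] at hi
        rcases hi with h | h
        · exact Fin.ext h
        · omega
      have hll : l = l' := by
        by_contra hne
        have hlv : l.val ≠ l'.val := fun h => hne (Fin.ext h)
        rcases Nat.lt_or_ge l.val l'.val with h | h
        · have hb : k + l.val < k + (m - 2) := by have := l'.isLt; omega
          have hw : ((⟨k + l.val, hb⟩ : Fin (k + (m - 2))) : ℕ) = k + l.val := rfl
          have hx : (⟨k + l.val, hb⟩ : Fin (k + (m - 2))) ∈ F (Sum.inr (i', l')) := by
            rw [memF, hw]; right; omega
          rw [← hab, memF, hw] at hx
          omega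
        · have h' : l'.val < l.val := by omega
          have hb : k + l'.val < k + (m - 2) := by have := l.isLt; omega
          have hw : ((⟨k + l'.val, hb⟩ : Fin (k + (m - 2))) : ℕ) = k + l'.val := rfl
          have hx : (⟨k + l'.val, hb⟩ : Fin (k + (m - 2))) ∈ F (Sum.inr (i, l)) := by
            rw [memF, hw]; right; omega
          rw [hab, memF, hw] at hx
          have := i'.isLt
          omega
      rw [hii, hll]
  · -- adjacency
    intro u v h
    rw [thetaGraph, fromRel_adj] at h
    obtain ⟨hne, h⟩ := h
    match u, v with
    | Sum.inl p, Sum.inl q =>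
      dsimp only at h
      exact absurd h (by simp)
    | Sum.inl p, Sum.inr (i, l) =>
      dsimp only at h
      have h' : (p = 0 ∧ l.val = 0) ∨ (p = 1 ∧ l.val = m - 2) := by
        rcases h with h | h
        · exact h
        · exact h.elim
      rcases h' with ⟨hp, hl⟩ | ⟨hp, hl⟩
      · subst hp; exact step1 i l hl
      · subst hp; exact step2 i l hl
    | Sum.inr (i, l), Sum.inl p =>
      dsimp only at h
      have h' : (p = 0 ∧ l.val = 0) ∨ (p = 1 ∧ l.val = m - 2) := by
        rcases h with h | h
        · exact h.elim
        · exact h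
      rcases h' with ⟨hp, hl⟩ | ⟨hp, hl⟩
      · subst hp; exact (step1 i l hl).symm
      · subst hp; exact (step2 i l hl).symm
    | Sum.inr (i, l), Sum.inr (i', l') =>
      dsimp only at h
      rcases h with ⟨hi, hl⟩ | ⟨hi, hl⟩
      · subst hi; exact step3 i l l' hl
      · subst hi; exact (step3 i' l' l hl).symm
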